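/- For integers N > 1 and K with K ≥ N, we have N - 1 + min((K-1)/(2N), 1 - 1/K) > N - N/K, i.e., the rate R_c(1/K) = N - 1 + min((K-1)/(2N), 1 - 1/K) strictly exceeds the rate R(1/K) = N(1 - 1/K). -/

import Mathlib

theorem stmt_1 (N K : ℕ) (hN : 1 < N) (hK : N ≤ K) :
    (N : ℝ) - 1 + min (((K : ℝ) - 1) / (2 * N)) (1 - 1 / K) >
      (N : ℝ) * (1 - 1 / K) := by
  have hn : (2 : ℝ) ≤ N := by exact_mod_cast hN
  have hk : (N : ℝ) ≤ K := by exact_mod_cast hK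
  have hN0 : (0 : ℝ) < N := by linarith
  have hK0 : (0 : ℝ) < K := by linarith
  have h1 : (K : ℝ) * (1 / K) = 1 := mul_one_div_cancel (ne_of_gt hK0)
  rcases min_cases (((K : ℝ) - 1) / (2 * N)) (1 - 1 / K) with ⟨h, _⟩ | ⟨h, _⟩
  · rw [h, gt_iff_lt]
    have hKne : (K:ℝ) ≠ 0 := ne_of_gt hK0
    have hNne : (N:ℝ) ≠ 0 := ne_of_gt hN0
    rw [show (N:ℝ) * (1 - 1/K) = (N*K - N)/K by field_simp,
      show (N:ℝ) - 1 + (K - 1)/(2*N) = ((N-1)*(2*N) + (K-1))/(2*N) by field_simp,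
      div_lt_div_iff₀ hK0 (by positivity)]
    nlinarith [sq_nonneg ((K:ℝ) - 2*N), mul_pos hN0 hK0]
  · rw [h]
    nlinarith [mul_pos hK0 hK0]
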